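/- Let F ⊆ ℝⁿ be a compact convex set with 0 in its interior. Then the proper exposed faces of the polar set F° are exactly the sets of the form G = {c ∈ N_F(x) : ⟨c, x⟩ = 1} for points x on the boundary of F; moreover, any such exposed face G has relative interior ri G = {c ∈ ri N_F(x) : ⟨c, x⟩ = 1}. -/

import Mathlib

open MeasureTheory Set

/-- The normal cone to a convex set `F` at a point `x`. -/
def normalCone {n : ℕ} (F : Set (EuclideanSpace ℝ (Fin n)))
    (x : EuclideanSpace ℝ (Fin n)) : Set (EuclideanSpace ℝ (Fin n)) :=
  {v | ∀ y ∈ F, (inner ℝ v (y - x) : ℝ) ≤ 0}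

/-- The polar of a set `F ⊆ ℝⁿ`. -/
def polarSet {n : ℕ} (F : Set (EuclideanSpace ℝ (Fin n))) : Set (EuclideanSpace ℝ (Fin n)) :=
  {c | ∀ x ∈ F, (inner ℝ c x : ℝ) ≤ 1}

section Aux

lemma mem_intrinsicInterior_iff' {E : Type*} [NormedAddCommGroup E] [NormedSpace ℝ E]
    {s : Set E} {c : E} (hc : c ∈ affineSpan ℝ s) :
    c ∈ intrinsicInterior ℝ s ↔ ∃ δ > 0, ∀ y ∈ affineSpan ℝ s, dist y c < δ → y ∈ s := by
  constructor
  · rintro ⟨y, hy, rfl⟩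
    rw [mem_interior_iff_mem_nhds, Metric.mem_nhds_iff] at hy
    obtain ⟨δ, hδ, hball⟩ := hy
    refine ⟨δ, hδ, fun z hz hdist => ?_⟩
    have : (⟨z, hz⟩ : affineSpan ℝ s) ∈ Metric.ball y δ := by
      rw [Metric.mem_ball, Subtype.dist_eq]; exact hdist
    exact hball this
  · rintro ⟨δ, hδ, h⟩
    refine ⟨⟨c, hc⟩, ?_, rfl⟩
    rw [mem_interior_iff_mem_nhds, Metric.mem_nhds_iff]
    refine ⟨δ, hδ, fun z hz => ?_⟩
    rw [Metric.mem_ball, Subtype.dist_eq] at hz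
    exact h z z.2 hz

variable {n : ℕ}

local notation "E" => EuclideanSpace ℝ (Fin n)
local notation "⟪" x ", " y "⟫" => @inner ℝ _ _ x y

/-- the normal cone is closed under nonnegative scaling -/
lemma normalCone_smul_mem {F : Set E} {x c : E} (hc : c ∈ normalCone F x) {t : ℝ} (ht : 0 ≤ t) :
    t • c ∈ normalCone F x := by
  intro y hy
  have h := hc y hy
  rw [real_inner_smul_left]
  exact mul_nonpos_iff.2 (Or.inl ⟨ht, h⟩)

lemma zero_mem_normalCone {F : Set E} {x : E} : (0 : E) ∈ normalCone F x := by
  intro y hy; simp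

/-- the exposed face of the polar at `x ∈ F` equals the normal-cone slice -/
lemma faceEq {F : Set E} {x : E} (hxF : x ∈ F) (c : E) :
    (c ∈ polarSet F ∧ ⟪c, x⟫ = 1) ↔ (c ∈ normalCone F x ∧ ⟪c, x⟫ = 1) := by
  constructor
  · rintro ⟨hc, h1⟩
    refine ⟨fun y hy => ?_, h1⟩
    rw [inner_sub_right, h1]
    linarith [hc y hy]
  · rintro ⟨hc, h1⟩
    refine ⟨fun y hy => ?_, h1⟩
    have h := hc y hy
    rw [inner_sub_right, h1] at h
    linarith

/-- existence of a supporting functional at a frontier point, normalized -/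
lemma exists_support {F : Set E} (hconv : Convex ℝ F) (h0 : (0:E) ∈ interior F)
    {x : E} (hx : x ∈ frontier F) : ∃ c, c ∈ normalCone F x ∧ ⟪c, x⟫ = 1 := by
  have hxi : x ∉ interior F := hx.2
  obtain ⟨f, hf⟩ := geometric_hahn_banach_open_point hconv.interior isOpen_interior hxi
  have hfx : 0 < f x := by simpa using hf 0 h0
  have hfF : ∀ y ∈ F, f y ≤ f x := by
    intro y hy
    have key : ∀ t : ℝ, 0 < t → t < 1 → t * f y < f x := by
      intro t ht ht1
      have hmem : (1 - t) • (0:E) + t • y ∈ interior F :=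
        hconv.combo_interior_closure_mem_interior h0 (subset_closure hy) (by linarith) ht.le
          (by ring)
      have := hf _ hmem
      simpa using this
    by_contra hlt
    push_neg at hlt
    have hfy : 0 < f y := hfx.trans hlt
    set t := (f x / f y + 1) / 2 with htdef
    have h1 : f x / f y < 1 := (div_lt_one hfy).2 hlt
    have h2 : 0 < f x / f y := div_pos hfx hfy
    have ht : 0 < t := by rw [htdef]; linarith
    have ht1 : t < 1 := by rw [htdef]; linarith
    have h3 := key t ht ht1
    have h4 : f x / f y < t := by rw [htdef]; linarith
    have h5 := mul_lt_mul_of_pos_right h4 hfy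
    rw [div_mul_cancel₀ _ hfy.ne'] at h5
    linarith
  set v := (InnerProductSpace.toDual ℝ (EuclideanSpace ℝ (Fin n))).symm f with hv
  have hvz : ∀ z : E, ⟪v, z⟫ = f z := fun z => InnerProductSpace.toDual_symm_apply
  refine ⟨(f x)⁻¹ • v, fun y hy => ?_, ?_⟩
  · rw [real_inner_smul_left, hvz, map_sub]
    have := hfF y hy
    have h6 : (0:ℝ) ≤ (f x)⁻¹ := inv_nonneg.2 hfx.le
    exact mul_nonpos_iff.2 (Or.inl ⟨h6, by linarith⟩)
  · rw [real_inner_smul_left, hvz]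
    field_simp

/-- quantitative positivity of the pairing on the normal cone -/
lemma inner_normalCone_ge {F : Set E} {x : E} {ε : ℝ} (hε : 0 < ε)
    (hball : Metric.ball (0:E) ε ⊆ F) {c : E} (hc : c ∈ normalCone F x) :
    ε / 2 * ‖c‖ ≤ ⟪c, x⟫ := by
  rcases eq_or_ne c 0 with rfl | hc0
  · simp
  · have hnc : (0:ℝ) < ‖c‖ := norm_pos_iff.2 hc0
    have hyF : ((ε/2) * ‖c‖⁻¹) • c ∈ F := by
      apply hball
      rw [Metric.mem_ball, dist_zero_right, norm_smul, Real.norm_eq_abs,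
        abs_of_pos (by positivity)]
      rw [mul_assoc, inv_mul_cancel₀ hnc.ne', mul_one]
      linarith
    have h := hc _ hyF
    rw [inner_sub_right, real_inner_smul_right, real_inner_self_eq_norm_mul_norm] at h
    have : ε / 2 * ‖c‖⁻¹ * (‖c‖ * ‖c‖) = ε / 2 * ‖c‖ := by field_simp
    linarith [h, this.symm.le]

lemma inner_normalCone_pos {F : Set E} {x : E} {ε : ℝ} (hε : 0 < ε)
    (hball : Metric.ball (0:E) ε ⊆ F) {c : E} (hc : c ∈ normalCone F x) (hc0 : c ≠ 0) :
    0 < ⟪c, x⟫ := by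
  have h := inner_normalCone_ge hε hball hc
  have : (0:ℝ) < ε / 2 * ‖c‖ := mul_pos (by linarith) (norm_pos_iff.2 hc0)
  linarith

/-- every element of the normal cone is a nonnegative multiple of a slice element;
hence the cone lies in the span of the slice -/
lemma normalCone_subset_span {F : Set E} {x : E} {ε : ℝ} (hε : 0 < ε)
    (hball : Metric.ball (0:E) ε ⊆ F) :
    normalCone F x ⊆
      (Submodule.span ℝ {c : E | c ∈ normalCone F x ∧ ⟪c, x⟫ = 1} : Set E) := by
  intro c hc
  rcases eq_or_ne c 0 with rfl | hc0
  · exact (Submodule.span ℝ _).zero_mem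
  · have hpos : 0 < ⟪c, x⟫ := inner_normalCone_pos hε hball hc hc0
    have hmem : (⟪c, x⟫)⁻¹ • c ∈ {c : E | c ∈ normalCone F x ∧ ⟪c, x⟫ = 1} := by
      refine ⟨normalCone_smul_mem hc (inv_nonneg.2 hpos.le), ?_⟩
      rw [real_inner_smul_left]
      exact inv_mul_cancel₀ hpos.ne'
    have heq : c = ⟪c, x⟫ • (⟪c, x⟫)⁻¹ • c := by
      rw [smul_smul, mul_inv_cancel₀ hpos.ne', one_smul]
    rw [heq]
    exact Submodule.smul_mem _ _ (Submodule.subset_span hmem)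

lemma affineSpan_normalCone_subset {F : Set E} {x : E} {ε : ℝ} (hε : 0 < ε)
    (hball : Metric.ball (0:E) ε ⊆ F) {y : E} (hy : y ∈ affineSpan ℝ (normalCone F x)) :
    y ∈ Submodule.span ℝ {c : E | c ∈ normalCone F x ∧ ⟪c, x⟫ = 1} := by
  have hle : affineSpan ℝ (normalCone F x) ≤
      (Submodule.span ℝ {c : E | c ∈ normalCone F x ∧ ⟪c, x⟫ = 1}).toAffineSubspace :=
    affineSpan_le.2 (normalCone_subset_span hε hball)
  exact hle hy

/-- span ∩ hyperplane ⊆ affine span -/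
lemma mem_affineSpan_of_span {G : Set E} {x g₀ : E} (hg₀ : g₀ ∈ G)
    (hG : ∀ g ∈ G, ⟪g, x⟫ = 1) {z : E} (hz : z ∈ Submodule.span ℝ G)
    (hz1 : ⟪z, x⟫ = 1) : z ∈ affineSpan ℝ G := by
  set φ : EuclideanSpace ℝ (Fin n) →L[ℝ] EuclideanSpace ℝ (Fin n) :=
    ContinuousLinearMap.id ℝ _ - (innerSL ℝ x).smulRight g₀ with hφ
  have hφval : ∀ w : E, φ w = w - ⟪x, w⟫ • g₀ := fun w => rfl
  have hkey : Submodule.span ℝ G ≤ Submodule.comap (φ : E →ₗ[ℝ] E) (vectorSpan ℝ G) := by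
    rw [Submodule.span_le]
    intro g hg
    have : φ g = g - g₀ := by
      rw [hφval, real_inner_comm, hG g hg, one_smul]
    have hmem : φ g ∈ vectorSpan ℝ G := by
      rw [this, ← vsub_eq_sub]
      exact vsub_mem_vectorSpan ℝ hg hg₀
    exact hmem
  have hφz : φ z ∈ vectorSpan ℝ G := hkey hz
  have hzz : φ z = z - g₀ := by rw [hφval, real_inner_comm, hz1, one_smul]
  have : z = (z - g₀) +ᵥ g₀ := by simp
  rw [this]
  exact AffineSubspace.vadd_mem_of_mem_direction
    (by rw [direction_affineSpan]; rw [hzz] at hφz; exact hφz) (mem_affineSpan ℝ hg₀)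

/-- the affine span of a subset of the hyperplane stays in the hyperplane -/
lemma affineSpan_subset_hyperplane {G : Set E} {x : E} (hG : ∀ g ∈ G, ⟪g, x⟫ = 1)
    {z : E} (hz : z ∈ affineSpan ℝ G) : ⟪z, x⟫ = 1 := by
  set Q : AffineSubspace ℝ (EuclideanSpace ℝ (Fin n)) :=
    { carrier := {y : E | ⟪y, x⟫ = 1}
      smul_vsub_vadd_mem' := by
        intro t p₁ p₂ p₃ h₁ h₂ h₃
        simp only [mem_setOf_eq] at h₁ h₂ h₃ ⊢
        rw [vsub_eq_sub, vadd_eq_add, inner_add_left, real_inner_smul_left, inner_sub_left,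
          h₁, h₂, h₃]
        ring } with hQ
  have : affineSpan ℝ G ≤ Q := affineSpan_le.2 (fun g hg => hG g hg)
  exact this hz

/-- Part 2: relative interior of the normal-cone slice -/
lemma part2_lemma {F : Set E} (hconv : Convex ℝ F) (h0 : (0:E) ∈ interior F)
    {x : E} (hx : x ∈ frontier F) :
    intrinsicInterior ℝ {c : E | c ∈ normalCone F x ∧ ⟪c, x⟫ = 1} =
      {c : E | c ∈ intrinsicInterior ℝ (normalCone F x) ∧ ⟪c, x⟫ = 1} := by
  obtain ⟨ε, hε, hball⟩ : ∃ ε > 0, Metric.ball (0:E) ε ⊆ F := by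
    rw [mem_interior_iff_mem_nhds] at h0
    exact Metric.mem_nhds_iff.1 h0
  set N := normalCone F x with hN
  set G := {c : E | c ∈ normalCone F x ∧ ⟪c, x⟫ = 1} with hG
  have hGsub : G ⊆ N := fun c hc => hc.1
  have hG1 : ∀ g ∈ G, ⟪g, x⟫ = 1 := fun g hg => hg.2
  ext c
  simp only [mem_setOf_eq]
  constructor
  · intro hc
    have hcG : c ∈ G := intrinsicInterior_subset hc
    refine ⟨?_, hcG.2⟩
    rw [mem_intrinsicInterior_iff' (mem_affineSpan ℝ hcG.1)]
    rw [mem_intrinsicInterior_iff' (mem_affineSpan ℝ hcG)] at hc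
    obtain ⟨δ', hδ', hδ'p⟩ := hc
    set φ : EuclideanSpace ℝ (Fin n) → EuclideanSpace ℝ (Fin n) :=
      fun y => (⟪y, x⟫)⁻¹ • y with hφ
    have hinner_cont : Continuous fun y : E => ⟪y, x⟫ :=
      continuous_id.inner continuous_const
    have hφc : φ c = c := by rw [hφ]; simp only; rw [hcG.2, inv_one, one_smul]
    have hcont : ContinuousAt φ c := by
      refine ContinuousAt.smul (f := fun y : E => (⟪y, x⟫)⁻¹) (g := fun y : E => y) ?_ continuousAt_id
      exact (hinner_cont.continuousAt.inv₀ (by rw [hcG.2]; exact one_ne_zero))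
    have hnhds : φ ⁻¹' Metric.ball c δ' ∩ {y : E | 0 < ⟪y, x⟫} ∈ nhds c := by
      refine Filter.inter_mem ?_ ?_
      · exact hcont.preimage_mem_nhds (by rw [hφc]; exact Metric.ball_mem_nhds c hδ')
      · have hopen : IsOpen {y : E | 0 < ⟪y, x⟫} := isOpen_lt continuous_const hinner_cont
        exact hopen.mem_nhds (by simp only [mem_setOf_eq, hcG.2]; norm_num)
    obtain ⟨δ, hδ, hballδ⟩ := Metric.mem_nhds_iff.1 hnhds
    refine ⟨δ, hδ, fun y hy hdist => ?_⟩
    have hy' := hballδ (Metric.mem_ball.2 hdist)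
    have hypos : 0 < ⟪y, x⟫ := hy'.2
    have hyspan : y ∈ Submodule.span ℝ G := affineSpan_normalCone_subset hε hball hy
    have hφspan : φ y ∈ Submodule.span ℝ G := Submodule.smul_mem _ _ hyspan
    have hφ1 : ⟪φ y, x⟫ = 1 := by
      rw [hφ]; simp only; rw [real_inner_smul_left]
      exact inv_mul_cancel₀ hypos.ne'
    have hφaff : φ y ∈ affineSpan ℝ G := mem_affineSpan_of_span hcG hG1 hφspan hφ1
    have hφG : φ y ∈ G := hδ'p _ hφaff (Metric.mem_ball.1 hy'.1)
    have hyeq : y = ⟪y, x⟫ • φ y := by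
      rw [hφ]; simp only; rw [smul_smul, mul_inv_cancel₀ hypos.ne', one_smul]
    rw [hyeq]
    exact normalCone_smul_mem hφG.1 hypos.le
  · rintro ⟨hcN, hc1⟩
    have hcNs : c ∈ N := intrinsicInterior_subset hcN
    have hcG : c ∈ G := ⟨hcNs, hc1⟩
    rw [mem_intrinsicInterior_iff' (mem_affineSpan ℝ hcG)]
    rw [mem_intrinsicInterior_iff' (mem_affineSpan ℝ hcNs)] at hcN
    obtain ⟨δ, hδ, hp⟩ := hcN
    refine ⟨δ, hδ, fun y hy hdist => ?_⟩
    exact ⟨hp y (affineSpan_mono ℝ hGsub hy) hdist, affineSpan_subset_hyperplane hG1 hy⟩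


/-- Suppose `0` lies in the interior of the compact convex set `F ⊆ ℝⁿ`.  Then the proper
exposed faces of the polar `F°` are exactly the sets `G = {c ∈ N_F(x) : ⟨c, x⟩ = 1}` for
`x` on the boundary of `F`; moreover any such face has relative interior
`ri G = {c ∈ ri N_F(x) : ⟨c, x⟩ = 1}`. -/
theorem stmt11 {n : ℕ} (F : Set (EuclideanSpace ℝ (Fin n)))
    (hcomp : IsCompact F) (hconv : Convex ℝ F) (h0 : (0 : EuclideanSpace ℝ (Fin n)) ∈ interior F) :
    (∀ G : Set (EuclideanSpace ℝ (Fin n)),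
      ((∃ c : EuclideanSpace ℝ (Fin n),
          G = {y ∈ polarSet F | ∀ z ∈ polarSet F, (inner ℝ c z : ℝ) ≤ inner ℝ c y}) ∧
        G ≠ polarSet F) ↔
      (∃ x ∈ frontier F, G = {c ∈ normalCone F x | (inner ℝ c x : ℝ) = 1})) ∧
    (∀ x ∈ frontier F,
      intrinsicInterior ℝ {c ∈ normalCone F x | (inner ℝ c x : ℝ) = 1} =
        {c ∈ intrinsicInterior ℝ (normalCone F x) | (inner ℝ c x : ℝ) = 1}) := by
  have hclosed : IsClosed F := hcomp.isClosed
  have h0F : (0 : EuclideanSpace ℝ (Fin n)) ∈ F := interior_subset h0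
  obtain ⟨ε, hε, hball⟩ : ∃ ε > 0, Metric.ball (0 : EuclideanSpace ℝ (Fin n)) ε ⊆ F := by
    rw [mem_interior_iff_mem_nhds] at h0
    exact Metric.mem_nhds_iff.1 h0
  have h0polar : (0 : EuclideanSpace ℝ (Fin n)) ∈ polarSet F := by
    intro z hz
    rw [inner_zero_left]
    norm_num
  constructor
  · intro G
    constructor
    · rintro ⟨⟨c, rfl⟩, hne⟩
      have hc0 : c ≠ 0 := by
        rintro rfl
        apply hne
        ext y
        simp only [Set.mem_sep_iff, inner_zero_left]
        exact ⟨fun h => h.1, fun h => ⟨h, fun z _ => le_refl 0⟩⟩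
      have hcn : (0:ℝ) < ‖c‖ := norm_pos_iff.2 hc0
      have hpolar_closed : IsClosed (polarSet F) := by
        have heq : polarSet F = ⋂ z ∈ F, {d : EuclideanSpace ℝ (Fin n) | ⟪d, z⟫ ≤ 1} := by
          ext d
          simp only [Set.mem_iInter, mem_setOf_eq]
          exact Iff.rfl
        rw [heq]
        exact isClosed_biInter fun z _ =>
          isClosed_le (continuous_id.inner continuous_const) continuous_const
      have hpolar_sub : polarSet F ⊆ Metric.closedBall 0 (2/ε) := by
        intro d hd
        rw [Metric.mem_closedBall, dist_zero_right]
        rcases eq_or_ne d 0 with rfl | hd0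
        · rw [norm_zero]
          positivity
        · have hdn : (0:ℝ) < ‖d‖ := norm_pos_iff.2 hd0
          have hyF : ((ε/2) * ‖d‖⁻¹) • d ∈ F := by
            apply hball
            rw [Metric.mem_ball, dist_zero_right, norm_smul, Real.norm_eq_abs,
              abs_of_pos (by positivity), mul_assoc, inv_mul_cancel₀ hdn.ne', mul_one]
            linarith
          have h := hd _ hyF
          rw [real_inner_smul_right, real_inner_self_eq_norm_mul_norm] at h
          have heq2 : ε / 2 * ‖d‖⁻¹ * (‖d‖ * ‖d‖) = ε / 2 * ‖d‖ := by
            field_simp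
          rw [heq2] at h
          rw [le_div_iff₀ hε]
          linarith
      have hpolar_cpt : IsCompact (polarSet F) :=
        IsCompact.of_isClosed_subset (isCompact_closedBall 0 (2/ε)) hpolar_closed hpolar_sub
      have hcont : Continuous fun y : EuclideanSpace ℝ (Fin n) => ⟪c, y⟫ :=
        continuous_const.inner continuous_id
      obtain ⟨y₀, hy₀p, hy₀max⟩ := hpolar_cpt.exists_isMaxOn ⟨0, h0polar⟩ hcont.continuousOn
      set M := ⟪c, y₀⟫ with hM
      have hy₀max' : ∀ z ∈ polarSet F, ⟪c, z⟫ ≤ M := fun z hz => hy₀max hz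
      have hMpos : 0 < M := by
        obtain ⟨R, hR⟩ := hcomp.isBounded.subset_closedBall 0
        have hR'pos : (0:ℝ) < max R 1 := lt_of_lt_of_le one_pos (le_max_right R 1)
        have hpos : (0:ℝ) < max R 1 * ‖c‖ := by positivity
        have hc'p : (max R 1 * ‖c‖)⁻¹ • c ∈ polarSet F := by
          intro w hw
          rw [real_inner_smul_left]
          have h1 : ⟪c, w⟫ ≤ ‖c‖ * ‖w‖ := real_inner_le_norm c w
          have h2 : ‖w‖ ≤ max R 1 := le_trans
            (by simpa [Metric.mem_closedBall, dist_zero_right] using hR hw) (le_max_left R 1)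
          have h3 : ⟪c, w⟫ ≤ max R 1 * ‖c‖ := by nlinarith
          calc (max R 1 * ‖c‖)⁻¹ * ⟪c, w⟫ ≤ (max R 1 * ‖c‖)⁻¹ * (max R 1 * ‖c‖) :=
                mul_le_mul_of_nonneg_left h3 (inv_nonneg.2 hpos.le)
            _ = 1 := inv_mul_cancel₀ hpos.ne'
        have h3 := hy₀max' _ hc'p
        rw [real_inner_smul_right, real_inner_self_eq_norm_mul_norm] at h3
        have h4 : (0:ℝ) < (max R 1 * ‖c‖)⁻¹ * (‖c‖ * ‖c‖) := by positivity
        linarith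
      set x := M⁻¹ • c with hxdef
      have hinner_cy : ∀ y : EuclideanSpace ℝ (Fin n), ⟪y, x⟫ = M⁻¹ * ⟪c, y⟫ := by
        intro y
        rw [hxdef, real_inner_smul_right, real_inner_comm]
      have hxF : x ∈ F := by
        by_contra hxFn
        obtain ⟨f, u, hfa, hfx⟩ := geometric_hahn_banach_closed_point hconv hclosed hxFn
        have hu : 0 < u := by
          have := hfa 0 h0F
          simpa using this
        set v := u⁻¹ • (InnerProductSpace.toDual ℝ (EuclideanSpace ℝ (Fin n))).symm f with hv
        have hvz : ∀ z : EuclideanSpace ℝ (Fin n), ⟪v, z⟫ = u⁻¹ * f z := by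
          intro z
          rw [hv, real_inner_smul_left, InnerProductSpace.toDual_symm_apply]
        have hvp : v ∈ polarSet F := by
          intro w hw
          rw [hvz]
          calc u⁻¹ * f w ≤ u⁻¹ * u :=
                mul_le_mul_of_nonneg_left (hfa w hw).le (inv_nonneg.2 hu.le)
            _ = 1 := inv_mul_cancel₀ hu.ne'
        have h1 : ⟪c, v⟫ ≤ M := hy₀max' _ hvp
        have h3 : ⟪v, x⟫ ≤ 1 := by
          rw [hinner_cy v]
          calc M⁻¹ * ⟪c, v⟫ ≤ M⁻¹ * M := mul_le_mul_of_nonneg_left h1 (inv_nonneg.2 hMpos.le)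
            _ = 1 := inv_mul_cancel₀ hMpos.ne'
        have h4 : 1 < u⁻¹ * f x := by
          have := mul_lt_mul_of_pos_left hfx (inv_pos.2 hu)
          rwa [inv_mul_cancel₀ hu.ne'] at this
        rw [hvz x] at h3
        linarith
      have hxint : x ∉ interior F := by
        intro hint
        obtain ⟨δ, hδ, hb⟩ := Metric.mem_nhds_iff.1 (mem_interior_iff_mem_nhds.1 hint)
        have hxne : x ≠ 0 := by
          rw [hxdef]
          exact smul_ne_zero (inv_ne_zero hMpos.ne') hc0
        have hxnorm : (0:ℝ) < ‖x‖ := norm_pos_iff.2 hxne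
        have htpos : 0 < δ / (2 * ‖x‖) := by positivity
        have hzF : (1 + δ / (2 * ‖x‖)) • x ∈ F := by
          apply hb
          rw [Metric.mem_ball, dist_eq_norm]
          have heq3 : (1 + δ / (2 * ‖x‖)) • x - x = (δ / (2 * ‖x‖)) • x := by
            rw [add_smul, one_smul]
            abel
          rw [heq3, norm_smul, Real.norm_eq_abs, abs_of_pos htpos]
          rw [div_mul_eq_mul_div, mul_comm]
          rw [div_lt_iff₀ (by positivity : (0:ℝ) < 2 * ‖x‖)]
          nlinarith
        have hy₀x : ⟪y₀, x⟫ = 1 := by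
          rw [hinner_cy y₀, ← hM, inv_mul_cancel₀ hMpos.ne']
        have h5 := hy₀p _ hzF
        rw [real_inner_smul_right, hy₀x, mul_one] at h5
        linarith
      have hxfr : x ∈ frontier F := by
        rw [hclosed.frontier_eq]
        exact ⟨hxF, hxint⟩
      refine ⟨x, hxfr, ?_⟩
      ext y
      simp only [Set.mem_sep_iff, mem_setOf_eq]
      constructor
      · rintro ⟨hyp, hmax⟩
        have h1 : ⟪c, y⟫ ≤ M := hy₀max' _ hyp
        have h2 : M ≤ ⟪c, y⟫ := hmax y₀ hy₀p
        have h3 : ⟪y, x⟫ = 1 := by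
          rw [hinner_cy y, (le_antisymm h1 h2 : ⟪c, y⟫ = M)]
          exact inv_mul_cancel₀ hMpos.ne'
        exact (faceEq hxF y).mp ⟨hyp, h3⟩
      · rintro ⟨hyN, hy1⟩
        have hyp : y ∈ polarSet F := ((faceEq hxF y).mpr ⟨hyN, hy1⟩).1
        refine ⟨hyp, fun z hz => ?_⟩
        have h2 : ⟪c, y⟫ = M := by
          have h6 := hinner_cy y
          rw [hy1] at h6
          have h7 : M * 1 = M * (M⁻¹ * ⟪c, y⟫) := by rw [h6]
          rw [mul_one, ← mul_assoc, mul_inv_cancel₀ hMpos.ne', one_mul] at h7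
          exact h7.symm
        rw [h2]
        exact hy₀max' _ hz
    · rintro ⟨x, hx, rfl⟩
      have hxF : x ∈ F := by
        have := hx.1
        rwa [hclosed.closure_eq] at this
      obtain ⟨c₀, hc₀N, hc₀1⟩ := exists_support hconv h0 hx
      have hc₀p : c₀ ∈ polarSet F := ((faceEq hxF c₀).mpr ⟨hc₀N, hc₀1⟩).1
      constructor
      · refine ⟨x, ?_⟩
        ext y
        simp only [Set.mem_sep_iff, mem_setOf_eq]
        constructor
        · rintro ⟨hyN, hy1⟩
          have hyp : y ∈ polarSet F := ((faceEq hxF y).mpr ⟨hyN, hy1⟩).1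
          refine ⟨hyp, fun z hz => ?_⟩
          have h1 : ⟪z, x⟫ ≤ 1 := hz x hxF
          calc ⟪x, z⟫ = ⟪z, x⟫ := real_inner_comm z x
            _ ≤ 1 := h1
            _ = ⟪y, x⟫ := hy1.symm
            _ = ⟪x, y⟫ := real_inner_comm x y
        · rintro ⟨hyp, hmax⟩
          have h1 : ⟪y, x⟫ ≤ 1 := hyp x hxF
          have h2 : (1:ℝ) ≤ ⟪y, x⟫ := by
            calc (1:ℝ) = ⟪c₀, x⟫ := hc₀1.symm
              _ = ⟪x, c₀⟫ := real_inner_comm x c₀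
              _ ≤ ⟪x, y⟫ := hmax c₀ hc₀p
              _ = ⟪y, x⟫ := real_inner_comm y x
          exact (faceEq hxF y).mp ⟨hyp, le_antisymm h1 h2⟩
      · intro hGeq
        rw [← hGeq] at h0polar
        have h8 := h0polar.2
        rw [inner_zero_left] at h8
        norm_num at h8
  · intro x hx
    exact part2_lemma hconv h0 hx

end Aux
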